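/- Let t1 < t2 be real numbers, b > 1, and let z ∈ ℂ⁺ satisfy |z − (t1+t2)/2| ≥ b·(t2−t1)/2. Then ω(z,[t1,t2]) ≥ ((b−1)/(2πb)) · (t2−t1)·Im z / Q(z,t1,t2) ≥ ((b−1)/(2πb)) · (t2−t1)·Im z / ((|z| + |t1|)·(|z| + |t2|)). -/

import Mathlib

open MeasureTheory

/-- Harmonic measure of the segment `[t1, t2]` at the point `z` for the open upper
half-plane, given by the Poisson integral of the indicator of `[t1, t2]`. -/
noncomputable def omegaUHP (z : ℂ) (t1 t2 : ℝ) : ℝ :=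
  ∫ t in t1..t2, (1 / Real.pi) * (z.im / ((t - z.re) ^ 2 + z.im ^ 2))

/-- `Q(z,t1,t2) := |z|² − (Re z)·(t1 + t2) + t1·t2`. -/
noncomputable def Q (z : ℂ) (t1 t2 : ℝ) : ℝ :=
  ‖z‖ ^ 2 - z.re * (t1 + t2) + t1 * t2

set_option maxHeartbeats 1000000 in
theorem stmt_8 (z : ℂ) (hz : 0 < z.im) (t1 t2 b : ℝ) (ht : t1 < t2) (hb : 1 < b)
    (hout : b * ((t2 - t1) / 2) ≤ ‖z - (((t1 + t2) / 2 : ℝ) : ℂ)‖) :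
    ((b - 1) / (2 * Real.pi * b)) * ((t2 - t1) * z.im / Q z t1 t2) ≤
        omegaUHP z t1 t2 ∧
    ((b - 1) / (2 * Real.pi * b)) *
        ((t2 - t1) * z.im / ((‖z‖ + |t1|) * (‖z‖ + |t2|))) ≤
      ((b - 1) / (2 * Real.pi * b)) * ((t2 - t1) * z.im / Q z t1 t2) := by
  have hπ : (0:ℝ) < Real.pi := Real.pi_pos
  set r : ℝ := (t2 - t1) / 2 with hrdef
  set s : ℝ := ‖z - (((t1 + t2) / 2 : ℝ) : ℂ)‖ with hsdef
  have hr0 : 0 < r := by rw [hrdef]; linarith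
  have hs0 : 0 ≤ s := norm_nonneg _
  have hbr : b * r ≤ s := hout
  have hsr : r < s := by nlinarith
  have hs2 : s ^ 2 = (z.re - (t1 + t2)/2) ^ 2 + z.im ^ 2 := by
    rw [hsdef, Complex.sq_norm, Complex.normSq_apply]
    simp [Complex.sub_re, Complex.sub_im]
    ring
  have habs : ‖z‖ ^ 2 = z.re ^ 2 + z.im ^ 2 := by
    rw [Complex.sq_norm, Complex.normSq_apply]; ring
  have hQ : Q z t1 t2 = s ^ 2 - r ^ 2 := by
    rw [Q, habs, hs2, hrdef]; ring
  have hQpos : 0 < Q z t1 t2 := by rw [hQ]; nlinarith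
  -- key inequality
  have key : (b - 1) * (s + r) ^ 2 ≤ 2 * b * (s ^ 2 - r ^ 2) := by
    nlinarith [mul_nonneg (mul_nonneg (sq_nonneg (b-1)) (by linarith : (0:ℝ) ≤ b+1)) (sq_nonneg r),
      mul_nonneg (mul_nonneg (by nlinarith : (0:ℝ) ≤ 2*b^2+2) (sub_nonneg.2 hbr)) hr0.le,
      mul_nonneg (by linarith : (0:ℝ) ≤ b+1) (sq_nonneg (s - b*r))]
  -- pointwise bound on denominator
  have hden : ∀ t ∈ Set.Icc t1 t2, (t - z.re) ^ 2 + z.im ^ 2 ≤ (s + r) ^ 2 := by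
    intro t htI
    obtain ⟨h1, h2⟩ := htI
    set a : ℝ := z.re - (t1 + t2)/2 with hadef
    set d : ℝ := t - (t1 + t2)/2 with hddef
    have ha2 : a ^ 2 ≤ s ^ 2 := by nlinarith [sq_nonneg z.im]
    have haL : -s ≤ a := by nlinarith
    have haR : a ≤ s := by nlinarith
    have hdL : -r ≤ d := by rw [hddef, hrdef]; linarith
    have hdR : d ≤ r := by rw [hddef, hrdef]; linarith
    have hta : t - z.re = d - a := by rw [hddef, hadef]; ring
    rw [hta]
    nlinarith [mul_nonneg (by linarith : (0:ℝ) ≤ r - d) (by linarith : (0:ℝ) ≤ s - a),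
      mul_nonneg (by linarith : (0:ℝ) ≤ r + d) (by linarith : (0:ℝ) ≤ s + a), hs2]
  -- integral lower bound
  have hcont : Continuous fun t : ℝ => (1 / Real.pi) * (z.im / ((t - z.re) ^ 2 + z.im ^ 2)) := by
    apply Continuous.mul continuous_const
    apply Continuous.div continuous_const (by continuity)
    intro t
    exact ne_of_gt (by nlinarith [sq_nonneg (t - z.re)])
  have hintle : (t2 - t1) * ((1 / Real.pi) * (z.im / (s + r) ^ 2)) ≤ omegaUHP z t1 t2 := by
    have hm := intervalIntegral.integral_mono_on (μ := volume) ht.le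
      (intervalIntegrable_const (c := (1 / Real.pi) * (z.im / (s + r) ^ 2)))
      (hcont.intervalIntegrable t1 t2)
      (fun t htI => by
        have hd := hden t htI
        have hdp : 0 < (t - z.re) ^ 2 + z.im ^ 2 := by nlinarith [sq_nonneg (t - z.re)]
        have hsp : 0 < (s + r) ^ 2 := by positivity
        exact mul_le_mul_of_nonneg_left
          (div_le_div_of_nonneg_left hz.le hdp hd) (by positivity))
    rw [intervalIntegral.integral_const, smul_eq_mul] at hm
    exact hm
  have hspr : 0 < (s + r) ^ 2 := by positivity
  constructor
  · refine le_trans ?_ hintle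
    rw [hQ]
    rw [div_mul_div_comm,
      show (1 / Real.pi) * (z.im / (s + r) ^ 2) = z.im / (Real.pi * (s + r) ^ 2) by
        rw [div_mul_div_comm, one_mul],
      ← mul_div_assoc]
    rw [div_le_div_iff₀ (mul_pos (by positivity) (by nlinarith)) (by positivity)]
    have hmul := mul_le_mul_of_nonneg_left key
      (mul_nonneg (mul_nonneg (by linarith : (0:ℝ) ≤ t2 - t1) hz.le) hπ.le)
    nlinarith [hmul]
  · have hQle : Q z t1 t2 ≤ (‖z‖ + |t1|) * (‖z‖ + |t2|) := by
      rw [Q]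
      have h1 : |z.re| ≤ ‖z‖ := Complex.abs_re_le_norm z
      nlinarith [neg_abs_le (z.re * t1), neg_abs_le (z.re * t2), abs_mul z.re t1,
        abs_mul z.re t2, le_abs_self (t1 * t2), abs_mul t1 t2,
        mul_le_mul_of_nonneg_right h1 (abs_nonneg t1),
        mul_le_mul_of_nonneg_right h1 (abs_nonneg t2),
        mul_nonneg (abs_nonneg t1) (abs_nonneg t2), norm_nonneg z]
    gcongr
    all_goals first
      | exact hQpos
      | exact hQle
      | exact div_nonneg (by linarith) (by positivity)
      | exact mul_nonneg (by linarith) hz.le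
      | positivity
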